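/- Let A be a unital C*-algebra with the LP property and K the C*-algebra of compact operators on a separable infinite-dimensional Hilbert space. Then A ⊗ K has the LP property. -/

import Mathlib

/-- A topological star algebra has the LP property if the linear span of its
projections (self-adjoint idempotents) is dense. -/
def LPProperty (A : Type*) [NonUnitalRing A] [Star A] [Module ℂ A]
    [TopologicalSpace A] : Prop :=
  Dense (↑(Submodule.span ℂ {p : A | IsSelfAdjoint p ∧ IsIdempotentElem p}) : Set A)

lemma star_stdBasisMatrix' {n : Type*} [DecidableEq n] {A : Type*} [AddMonoid A]
    [StarAddMonoid A] (i j : n) (a : A) :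
    star (Matrix.single i j a) = Matrix.single j i (star a) := by
  ext k l
  simp only [Matrix.star_apply, Matrix.single, Matrix.of_apply]
  split_ifs with h1 h2 h2 <;> simp_all [and_comm, star_zero]

theorem linear_span_stmt19 {A B : Type*} [CStarAlgebra A] [NonUnitalCStarAlgebra B]
    (S : ℕ → NonUnitalStarSubalgebra ℂ B) (hmono : Monotone S)
    (hdense : Dense (⋃ n, (S n : Set B)))
    (φ : ∀ n : ℕ, Matrix (Fin (n + 1)) (Fin (n + 1)) A →⋆ₙₐ[ℂ] B)
    (hinj : ∀ n, Function.Injective (φ n))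
    (hrange : ∀ n, Set.range (φ n) = (S n : Set B))
    (hA : LPProperty A) : LPProperty B := by
  classical
  set P : Set B := {p : B | IsSelfAdjoint p ∧ IsIdempotentElem p} with hP
  set V : Submodule ℂ B := (Submodule.span ℂ P).topologicalClosure with hV
  -- the key claim: every single-entry matrix image lies in V
  have key : ∀ (n : ℕ) (i j : Fin (n + 1)) (a : A),
      φ n (Matrix.single i j a) ∈ V := by
    intro n i j a
    -- the star homomorphism `a ↦ φ n (E_kk a)` for each diagonal index
    have ψdef : ∀ (k : Fin (n + 1)), ∃ ψ : A →⋆ₙₐ[ℂ] B,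
        (∀ a, ψ a = φ n (Matrix.single k k a)) ∧ Function.Injective ψ := by
      intro k
      refine ⟨{ toFun := fun a => φ n (Matrix.single k k a)
                map_add' := by
                  intro x y
                  show φ n (Matrix.single k k (x + y)) = _
                  rw [Matrix.single_add, map_add]
                map_mul' := by
                  intro x y
                  show φ n (Matrix.single k k (x * y)) = _
                  rw [← map_mul, Matrix.single_mul_single_same]
                map_smul' := by
                  intro c x
                  show φ n (Matrix.single k k (c • x)) = _
                  rw [← Matrix.smul_single, map_smul]
                  rfl
                map_zero' := by
                  show φ n (Matrix.single k k (0 : A)) = 0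
                  rw [Matrix.single_zero, map_zero]
                map_star' := by
                  intro x
                  show φ n (Matrix.single k k (star x)) = _
                  rw [← map_star, star_stdBasisMatrix'] }, fun a => rfl, ?_⟩
      intro x y hxy
      simp only [NonUnitalStarAlgHom.coe_mk] at hxy
      have h := hinj n hxy
      have h2 := congrArg (fun M => M k k) h
      simpa [Matrix.single] using h2
    -- the linear map `f a = φ n (E_ij a)`
    set f : A →ₗ[ℂ] B :=
      { toFun := fun a => φ n (Matrix.single i j a)
        map_add' := by
          intro x y
          show φ n (Matrix.single i j (x + y)) = _
          rw [Matrix.single_add, map_add]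
        map_smul' := by
          intro c x
          show φ n (Matrix.single i j (c • x)) = _
          rw [← Matrix.smul_single, map_smul]
          rfl } with hf
    -- f is isometric, hence continuous
    obtain ⟨ψ, hψ, hψinj⟩ := ψdef j
    have fnorm : ∀ a : A, ‖f a‖ = ‖a‖ := by
      intro a
      have h1 : star (f a) * f a = ψ (star a * a) := by
        simp only [hf, LinearMap.coe_mk, AddHom.coe_mk, hψ, ← map_star, ← map_mul,
          star_stdBasisMatrix', Matrix.single_mul_single_same]
      have h2 : ‖ψ (star a * a)‖ = ‖star a * a‖ :=
        NonUnitalStarAlgHom.norm_map ψ hψinj _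
      have h3 := congrArg (‖·‖) h1
      rw [CStarRing.norm_star_mul_self, h2, CStarRing.norm_star_mul_self] at h3
      exact (mul_self_inj (norm_nonneg _) (norm_nonneg _)).mp h3
    have fcont : Continuous f := (AddMonoidHomClass.isometry_of_norm f fnorm).continuous
    -- projections in P for the diagonal corners
    have diag : ∀ (p : A), IsSelfAdjoint p → IsIdempotentElem p →
        ∀ k, φ n (Matrix.single k k p) ∈ P := by
      intro p hp1 hp2 k
      constructor
      · rw [IsSelfAdjoint, ← map_star, star_stdBasisMatrix', hp1.star_eq]
      · rw [IsIdempotentElem, ← map_mul, Matrix.single_mul_single_same, hp2.eq]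
    -- each projection of A maps into V
    have fproj : ∀ p ∈ {p : A | IsSelfAdjoint p ∧ IsIdempotentElem p}, f p ∈ V := by
      rintro p ⟨hp1, hp2⟩
      have hVle : Submodule.span ℂ P ≤ V := Submodule.le_topologicalClosure _
      rcases eq_or_ne i j with rfl | hij
      · exact hVle (Submodule.subset_span (diag p hp1 hp2 i))
      · set Dii := Matrix.single i i p with hDii
        set Djj := Matrix.single j j p with hDjj
        set X := Matrix.single i j p with hX
        set Y := Matrix.single j i p with hY
        set M1 : Matrix (Fin (n+1)) (Fin (n+1)) A := (2:ℂ)⁻¹ • (Dii + X + Y + Djj) with hM1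
        set M2 : Matrix (Fin (n+1)) (Fin (n+1)) A :=
          (2:ℂ)⁻¹ • (Dii + (-Complex.I) • X + Complex.I • Y + Djj) with hM2
        have hpe : p * p = p := hp2.eq
        have hji : j ≠ i := hij.symm
        have hz1 : ∀ (a b : Fin (n+1)) (c d : A),
            Matrix.single a j c * Matrix.single i b d = 0 :=
          fun a b c d => Matrix.single_mul_single_of_ne (c := c) a j i hji d
        have hz2 : ∀ (a b : Fin (n+1)) (c d : A),
            Matrix.single a i c * Matrix.single j b d = 0 :=
          fun a b c d => Matrix.single_mul_single_of_ne (c := c) a i j hij d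
        have e1 : M1 * M1 = M1 := by
          rw [hM1, smul_mul_smul_comm]
          have : (Dii + X + Y + Djj) * (Dii + X + Y + Djj)
              = (2:ℂ) • (Dii + X + Y + Djj) := by
            simp only [hDii, hDjj, hX, hY, mul_add, add_mul,
              Matrix.single_mul_single_same, hz1, hz2, hpe]
            module
          rw [this]
          module
        have e2 : M2 * M2 = M2 := by
          rw [hM2, smul_mul_smul_comm]
          have : (Dii + (-Complex.I) • X + Complex.I • Y + Djj) *
              (Dii + (-Complex.I) • X + Complex.I • Y + Djj)
              = (2:ℂ) • (Dii + (-Complex.I) • X + Complex.I • Y + Djj) := by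
            simp only [hDii, hDjj, hX, hY, mul_add, add_mul, Matrix.smul_mul,
              Matrix.mul_smul, Matrix.single_mul_single_same, hz1, hz2, hpe, smul_zero, smul_smul,
              neg_mul, mul_neg, Complex.I_mul_I, neg_neg, one_smul, neg_smul]
            module
          rw [this]
          module
        have s1 : star M1 = M1 := by
          rw [hM1]
          simp only [star_smul, star_add, hDii, hDjj, hX, hY, star_stdBasisMatrix',
            hp1.star_eq, Complex.star_def, map_inv₀, map_ofNat]
          module
        have s2 : star M2 = M2 := by
          rw [hM2]
          simp only [star_smul, star_add, hDii, hDjj, hX, hY, star_stdBasisMatrix',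
            hp1.star_eq, Complex.star_def, map_inv₀, map_ofNat, map_neg, Complex.conj_I]
          module
        have pM1 : φ n M1 ∈ P := by
          constructor
          · rw [IsSelfAdjoint, ← map_star, s1]
          · rw [IsIdempotentElem, ← map_mul, e1]
        have pM2 : φ n M2 ∈ P := by
          constructor
          · rw [IsSelfAdjoint, ← map_star, s2]
          · rw [IsIdempotentElem, ← map_mul, e2]
        have decomp : X = M1 + Complex.I • M2
            - ((1 + Complex.I) * (2:ℂ)⁻¹) • (Dii + Djj) := by
          rw [hM1, hM2]
          match_scalars <;> ring_nf <;> simp [Complex.I_sq] <;> ring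
        have : f p = φ n M1 + Complex.I • φ n M2
            - ((1 + Complex.I) * (2:ℂ)⁻¹) • (φ n Dii + φ n Djj) := by
          show φ n X = _
          rw [decomp]
          simp only [map_sub, map_add, map_smul]
        rw [this]
        refine Submodule.sub_mem _ (Submodule.add_mem _ ?_ (Submodule.smul_mem _ _ ?_))
          (Submodule.smul_mem _ _ (Submodule.add_mem _ ?_ ?_))
        · exact hVle (Submodule.subset_span pM1)
        · exact hVle (Submodule.subset_span pM2)
        · exact hVle (Submodule.subset_span (diag p hp1 hp2 i))
        · exact hVle (Submodule.subset_span (diag p hp1 hp2 j))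
    -- conclude by density of the span of projections in A
    have hmaps : Set.MapsTo f
        (Submodule.span ℂ {p : A | IsSelfAdjoint p ∧ IsIdempotentElem p} : Set A)
        (V : Set B) := by
      intro x hx
      induction hx using Submodule.span_induction with
      | mem x hx => exact fproj x hx
      | zero => simpa using V.zero_mem
      | add x y _ _ hx hy => rw [map_add]; exact V.add_mem hx hy
      | smul c x _ hx => rw [map_smul]; exact V.smul_mem c hx
    have ha : a ∈ closure
        (Submodule.span ℂ {p : A | IsSelfAdjoint p ∧ IsIdempotentElem p} : Set A) := hA a
    have := map_mem_closure fcont ha hmaps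
    rwa [IsClosed.closure_eq (Submodule.isClosed_topologicalClosure _)] at this
  -- every element of every `S n` lies in V
  have hsub : (⋃ n, (S n : Set B)) ⊆ (V : Set B) := by
    rintro b hb
    simp only [Set.mem_iUnion] at hb
    obtain ⟨n, hbn⟩ := hb
    rw [← hrange n] at hbn
    obtain ⟨m, rfl⟩ := hbn
    rw [show m = ∑ i, ∑ j, Matrix.single i j (m i j) from
      Matrix.matrix_eq_sum_single m]
    rw [map_sum]
    refine Submodule.sum_mem _ fun i _ => ?_
    rw [map_sum]
    exact Submodule.sum_mem _ fun j _ => key n i j (m i j)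
  intro x
  have hx : x ∈ closure (V : Set B) := closure_mono hsub (hdense x)
  rw [IsClosed.closure_eq (Submodule.isClosed_topologicalClosure _)] at hx
  have hx2 : x ∈ closure (↑(Submodule.span ℂ P) : Set B) := by
    rwa [← Submodule.topologicalClosure_coe]
  exact hx2
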